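/- Let Γ be a finite cyclic group acting linearly on ℝⁿ and let x₀ ∈ ℝⁿ. Then there exists a Γ-equivariant polynomial vector field f : ℝⁿ → ℝⁿ such that f(x₀) = 0 and x₀ is a linearly stable equilibrium, i.e. every eigenvalue of the complexification of the Jacobian (df)_{x₀} has strictly negative real part. -/

import Mathlib

open Finset MvPolynomial

namespace StableEqAux

variable {n : ℕ}

noncomputable def qd (y v : Fin n → ℝ) : ℝ := ∑ k, (v k - y k)^2

lemma qd_self (y : Fin n → ℝ) : qd y y = 0 := by simp [qd]

lemma qd_ne_zero {y v : Fin n → ℝ} (h : v ≠ y) : qd y v ≠ 0 := by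
  intro h0
  apply h
  funext k
  have hk : ∀ k ∈ Finset.univ, (v k - y k)^2 = 0 := by
    rw [← Finset.sum_eq_zero_iff_of_nonneg (fun k _ => sq_nonneg _)]
    exact h0
  have := hk k (Finset.mem_univ k)
  nlinarith [this]

lemma qd_diff (y : Fin n → ℝ) : Differentiable ℝ (qd y) := by
  apply Differentiable.fun_sum
  intro k _
  exact (differentiable_apply k |>.sub_const _).pow 2

noncomputable def psi (x₀ y v : Fin n → ℝ) : ℝ := (qd y v)^2 * ((qd y x₀)^2)⁻¹

lemma psi_diff (x₀ y : Fin n → ℝ) : Differentiable ℝ (psi x₀ y) :=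
  ((qd_diff y).pow 2).mul_const _

lemma psi_self (x₀ y : Fin n → ℝ) : psi x₀ y y = 0 := by simp [psi, qd_self]

lemma psi_x₀ {x₀ y : Fin n → ℝ} (h : x₀ ≠ y) : psi x₀ y x₀ = 1 := by
  have := qd_ne_zero h
  rw [psi]; exact mul_inv_cancel₀ (pow_ne_zero 2 this)

lemma psi_hasDeriv_zero (x₀ y : Fin n → ℝ) : HasFDerivAt (psi x₀ y) (0 : (Fin n → ℝ) →L[ℝ] ℝ) y := by
  have hq : HasFDerivAt (qd y) (fderiv ℝ (qd y) y) y := (qd_diff y y).hasFDerivAt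
  have h2 : HasFDerivAt (fun v => (qd y v)^2) (0 : (Fin n → ℝ) →L[ℝ] ℝ) y := by
    have h := hq.mul hq
    have h' : HasFDerivAt (fun v => qd y v * qd y v) (0 : (Fin n → ℝ) →L[ℝ] ℝ) y := by
      exact h.congr_fderiv (by simp [qd_self])
    simpa [pow_two] using h'
  have h3 := h2.mul_const ((qd y x₀)^2)⁻¹
  exact h3.congr_fderiv (by simp)

noncomputable def phi (x₀ : Fin n → ℝ) (S : Finset (Fin n → ℝ)) (v : Fin n → ℝ) : ℝ :=
  ∏ y ∈ S, psi x₀ y v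

lemma phi_diff (x₀ : Fin n → ℝ) (S : Finset (Fin n → ℝ)) : Differentiable ℝ (phi x₀ S) := by
  classical
  induction S using Finset.induction with
  | empty =>
      have h0 : phi x₀ (∅ : Finset (Fin n → ℝ)) = fun _ => (1:ℝ) := by
        funext v; simp [phi]
      rw [h0]; exact differentiable_const 1
  | @insert a s h ih =>
      have hins : phi x₀ (insert a s) = fun v => psi x₀ a v * phi x₀ s v := by
        funext v; simp [phi, Finset.prod_insert h]
      rw [hins]
      exact (psi_diff _ _).mul ih

lemma phi_x₀ {x₀ : Fin n → ℝ} {S : Finset (Fin n → ℝ)} (h : x₀ ∉ S) : phi x₀ S x₀ = 1 := by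
  apply Finset.prod_eq_one
  intro y hy
  exact psi_x₀ (fun e => h (e ▸ hy))

lemma phi_mem {x₀ : Fin n → ℝ} {S : Finset (Fin n → ℝ)} {y : Fin n → ℝ} (hy : y ∈ S) :
    phi x₀ S y = 0 :=
  Finset.prod_eq_zero hy (psi_self x₀ y)

lemma phi_hasDeriv_zero {x₀ : Fin n → ℝ} {S : Finset (Fin n → ℝ)} {y : Fin n → ℝ} (hy : y ∈ S) :
    HasFDerivAt (phi x₀ S) (0 : (Fin n → ℝ) →L[ℝ] ℝ) y := by
  classical
  have hsplit : phi x₀ S = fun v => psi x₀ y v * phi x₀ (S.erase y) v := by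
    funext v; exact (Finset.mul_prod_erase S (fun z => psi x₀ z v) hy).symm
  rw [hsplit]
  have hrest : HasFDerivAt (phi x₀ (S.erase y)) (fderiv ℝ (phi x₀ (S.erase y)) y) y :=
    (phi_diff x₀ (S.erase y) y).hasFDerivAt
  have := (psi_hasDeriv_zero x₀ y).mul hrest
  exact this.congr_fderiv (by simp [psi_self])

noncomputable def hh (x₀ : Fin n → ℝ) (S : Finset (Fin n → ℝ)) (v : Fin n → ℝ) : Fin n → ℝ :=
  (-(phi x₀ S v)) • (v - x₀)

lemma hh_x₀ (x₀ : Fin n → ℝ) (S : Finset (Fin n → ℝ)) : hh x₀ S x₀ = 0 := by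
  simp [hh]

lemma hh_mem {x₀ : Fin n → ℝ} {S : Finset (Fin n → ℝ)} {y : Fin n → ℝ} (hy : y ∈ S) :
    hh x₀ S y = 0 := by
  simp [hh, phi_mem hy]

lemma hh_deriv_x₀ {x₀ : Fin n → ℝ} {S : Finset (Fin n → ℝ)} (h : x₀ ∉ S) :
    HasFDerivAt (hh x₀ S) (-(ContinuousLinearMap.id ℝ (Fin n → ℝ))) x₀ := by
  have hc : HasFDerivAt (fun v => -(phi x₀ S v)) (-(fderiv ℝ (phi x₀ S) x₀)) x₀ :=
    ((phi_diff x₀ S x₀).hasFDerivAt).neg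
  have hf : HasFDerivAt (fun v : Fin n → ℝ => v - x₀) (ContinuousLinearMap.id ℝ (Fin n → ℝ)) x₀ :=
    (hasFDerivAt_id x₀).sub_const x₀
  have := hc.smul hf
  have hval : -(phi x₀ S x₀) = -1 := by rw [phi_x₀ h]
  have this : HasFDerivAt (hh x₀ S) _ x₀ := this
  refine this.congr_fderiv ?_
  ext u
  simp [hval, phi_x₀ h]

lemma hh_deriv_mem {x₀ : Fin n → ℝ} {S : Finset (Fin n → ℝ)} {y : Fin n → ℝ} (hy : y ∈ S) :
    HasFDerivAt (hh x₀ S) (0 : (Fin n → ℝ) →L[ℝ] (Fin n → ℝ)) y := by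
  have hc : HasFDerivAt (fun v => -(phi x₀ S v)) (-(0 : (Fin n → ℝ) →L[ℝ] ℝ)) y :=
    (phi_hasDeriv_zero hy).neg
  have hf : HasFDerivAt (fun v : Fin n → ℝ => v - x₀) (ContinuousLinearMap.id ℝ (Fin n → ℝ)) y :=
    (hasFDerivAt_id y).sub_const x₀
  have := hc.smul hf
  have this : HasFDerivAt (hh x₀ S) _ y := this
  refine this.congr_fderiv ?_
  ext u
  simp [phi_mem hy]

/- Polynomial witnesses -/

noncomputable def QD (y : Fin n → ℝ) : MvPolynomial (Fin n) ℝ := ∑ k, (X k - C (y k))^2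

lemma eval_QD (y v : Fin n → ℝ) : eval v (QD y) = qd y v := by
  simp [QD, qd]

noncomputable def PSI (x₀ y : Fin n → ℝ) : MvPolynomial (Fin n) ℝ :=
  (QD y)^2 * C (((qd y x₀)^2)⁻¹)

lemma eval_PSI (x₀ y v : Fin n → ℝ) : eval v (PSI x₀ y) = psi x₀ y v := by
  simp [PSI, psi, eval_QD]

noncomputable def PHI (x₀ : Fin n → ℝ) (S : Finset (Fin n → ℝ)) : MvPolynomial (Fin n) ℝ :=
  ∏ y ∈ S, PSI x₀ y

lemma eval_PHI (x₀ : Fin n → ℝ) (S : Finset (Fin n → ℝ)) (v : Fin n → ℝ) :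
    eval v (PHI x₀ S) = phi x₀ S v := by
  simp [PHI, phi, eval_PSI]

noncomputable def HH (x₀ : Fin n → ℝ) (S : Finset (Fin n → ℝ)) (j : Fin n) :
    MvPolynomial (Fin n) ℝ := -(PHI x₀ S * (X j - C (x₀ j)))

lemma eval_HH (x₀ : Fin n → ℝ) (S : Finset (Fin n → ℝ)) (j : Fin n) (v : Fin n → ℝ) :
    eval v (HH x₀ S j) = hh x₀ S v j := by
  simp only [HH, hh, map_neg, eval_mul, eval_sub, eval_X, eval_C, eval_PHI,
    Pi.smul_apply, Pi.sub_apply, smul_eq_mul]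
  ring

noncomputable def LINP (L : (Fin n → ℝ) →ₗ[ℝ] (Fin n → ℝ)) (k : Fin n) :
    MvPolynomial (Fin n) ℝ :=
  ∑ j, C (L (fun m => if j = m then 1 else 0) k) * X j

lemma eval_LINP (L : (Fin n → ℝ) →ₗ[ℝ] (Fin n → ℝ)) (k : Fin n) (v : Fin n → ℝ) :
    eval v (LINP L k) = L v k := by
  rw [LinearMap.pi_apply_eq_sum_univ L v]
  simp [LINP, Finset.sum_apply, mul_comm]

lemma eval_bind₁' (g : Fin n → MvPolynomial (Fin n) ℝ) (p : MvPolynomial (Fin n) ℝ)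
    (v : Fin n → ℝ) :
    eval v (MvPolynomial.bind₁ g p) = eval (fun i => eval v (g i)) p := by
  simpa using aeval_bind₁ (R := ℝ) (fun i : Fin n => v i) g p

end StableEqAux

open StableEqAux

theorem exists_equivariant_polynomial_field_with_stable_equilibrium
    (n : ℕ) (Γ : Type*) [Group Γ] [Fintype Γ] [IsCyclic Γ]
    (ρ : Representation ℝ Γ (Fin n → ℝ)) (x₀ : Fin n → ℝ) :
    ∃ f : (Fin n → ℝ) → (Fin n → ℝ),
      (∃ p : Fin n → MvPolynomial (Fin n) ℝ,
        ∀ (v : Fin n → ℝ) (i : Fin n), f v i = MvPolynomial.eval v (p i)) ∧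
      (∀ (γ : Γ) (v : Fin n → ℝ), f (ρ γ v) = ρ γ (f v)) ∧
      f x₀ = 0 ∧
      ∃ D : (Fin n → ℝ) →L[ℝ] (Fin n → ℝ),
        HasFDerivAt f D x₀ ∧
        ∀ μ ∈ spectrum ℂ
            ((LinearMap.toMatrix' ((D : (Fin n → ℝ) →ₗ[ℝ] (Fin n → ℝ)))).map
              (Complex.ofReal : ℝ → ℂ)),
          μ.re < 0 := by
  classical
  set S : Finset (Fin n → ℝ) := (Finset.univ.image (fun γ : Γ => ρ γ x₀)).erase x₀ with hS
  have hx₀S : x₀ ∉ S := Finset.notMem_erase _ _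
  have horbit : ∀ γ : Γ, ρ γ x₀ ≠ x₀ → ρ γ x₀ ∈ S := by
    intro γ hne
    exact Finset.mem_erase.mpr ⟨hne, Finset.mem_image.mpr ⟨γ, Finset.mem_univ γ, rfl⟩⟩
  set f : (Fin n → ℝ) → (Fin n → ℝ) := fun v => ∑ γ : Γ, ρ γ⁻¹ (hh x₀ S (ρ γ v)) with hf
  set m : ℕ := (Finset.univ.filter (fun γ : Γ => ρ γ x₀ = x₀)).card with hm
  have hm1 : 1 ≤ m := by
    rw [hm]
    apply Finset.card_pos.mpr
    exact ⟨1, Finset.mem_filter.mpr ⟨Finset.mem_univ _, by simp⟩⟩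
  refine ⟨f, ?_, ?_, ?_, ?_⟩
  · -- polynomiality
    refine ⟨fun i => ∑ γ : Γ, ∑ j : Fin n,
      MvPolynomial.bind₁ (LINP (ρ γ)) (HH x₀ S j) *
        C ((ρ γ⁻¹) (fun m => if j = m then 1 else 0) i), ?_⟩
    intro v i
    simp only [hf]
    simp only [map_sum, Finset.sum_apply, eval_mul, eval_C]
    refine Finset.sum_congr rfl ?_
    intro γ _
    rw [LinearMap.pi_apply_eq_sum_univ (ρ γ⁻¹) (hh x₀ S (ρ γ v))]
    simp only [Finset.sum_apply, Pi.smul_apply, smul_eq_mul]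
    refine Finset.sum_congr rfl ?_
    intro j _
    rw [eval_bind₁']
    have : (fun k => eval v (LINP (ρ γ) k)) = ρ γ v := by
      funext k; rw [eval_LINP]
    rw [this, eval_HH]
  · -- equivariance
    intro δ v
    simp only [hf]
    rw [map_sum]
    rw [show (∑ γ : Γ, ρ γ⁻¹ (hh x₀ S (ρ γ (ρ δ v)))) =
        ∑ γ : Γ, ρ γ⁻¹ (hh x₀ S (ρ (γ * δ) v)) from by
      refine Finset.sum_congr rfl fun γ _ => ?_
      rw [map_mul]; rfl]
    refine Fintype.sum_equiv (Equiv.mulRight δ) _ _ ?_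
    intro γ
    simp only [Equiv.coe_mulRight]
    rw [show (ρ δ) ((ρ (γ * δ)⁻¹) (hh x₀ S ((ρ (γ * δ)) v)))
        = (ρ δ * ρ (γ * δ)⁻¹) (hh x₀ S ((ρ (γ * δ)) v)) from rfl, ← map_mul]
    congr 2
    group
  · -- f x₀ = 0
    simp only [hf]
    apply Finset.sum_eq_zero
    intro γ _
    by_cases hst : ρ γ x₀ = x₀
    · rw [hst, hh_x₀]; simp
    · rw [hh_mem (horbit γ hst)]; simp
  · -- derivative
    have instFD : FiniteDimensional ℝ (Fin n → ℝ) := by infer_instance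
    set D : (Fin n → ℝ) →L[ℝ] (Fin n → ℝ) :=
      (-(m : ℝ)) • ContinuousLinearMap.id ℝ (Fin n → ℝ) with hD
    refine ⟨D, ?_, ?_⟩
    · -- HasFDerivAt f D x₀
      set Lc : Γ → ((Fin n → ℝ) →L[ℝ] (Fin n → ℝ)) :=
        fun γ => LinearMap.toContinuousLinearMap (ρ γ) with hLc
      set D' : Γ → ((Fin n → ℝ) →L[ℝ] (Fin n → ℝ)) := fun γ =>
        if ρ γ x₀ = x₀ then
          (Lc γ⁻¹).comp ((-(ContinuousLinearMap.id ℝ (Fin n → ℝ))).comp (Lc γ))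
        else 0 with hD'
      have hterm : ∀ γ : Γ, HasFDerivAt (fun v => ρ γ⁻¹ (hh x₀ S (ρ γ v))) (D' γ) x₀ := by
        intro γ
        have hL : HasFDerivAt (fun v => ρ γ v) (Lc γ) x₀ := by
          exact (Lc γ).hasFDerivAt (x := x₀)
        by_cases hst : ρ γ x₀ = x₀
        · have hhh : HasFDerivAt (hh x₀ S) (-(ContinuousLinearMap.id ℝ (Fin n → ℝ))) (ρ γ x₀) := by
            rw [hst]; exact hh_deriv_x₀ hx₀S
          have hcomp := hhh.comp x₀ hL
          have houter := ((Lc γ⁻¹).hasFDerivAt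
            (x := hh x₀ S (ρ γ x₀))).comp x₀ hcomp
          rw [hD']
          simp only [hst, if_pos]
          convert houter using 2 <;> rfl
        · have hhh : HasFDerivAt (hh x₀ S) 0 (ρ γ x₀) := hh_deriv_mem (horbit γ hst)
          have hcomp := hhh.comp x₀ hL
          have houter := ((Lc γ⁻¹).hasFDerivAt
            (x := hh x₀ S (ρ γ x₀))).comp x₀ hcomp
          rw [hD']
          simp only [hst, if_neg, if_false]
          have : (Lc γ⁻¹).comp ((0 : (Fin n → ℝ) →L[ℝ] (Fin n → ℝ)).comp (Lc γ)) = 0 := by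
            ext u; simp
          rw [show (0 : (Fin n → ℝ) →L[ℝ] (Fin n → ℝ)) = (Lc γ⁻¹).comp
            ((0 : (Fin n → ℝ) →L[ℝ] (Fin n → ℝ)).comp (Lc γ)) from this.symm]
          convert houter using 2 <;> rfl
      have hsum : HasFDerivAt f (∑ γ : Γ, D' γ) x₀ :=
        HasFDerivAt.fun_sum (fun γ _ => hterm γ)
      have hDeq : (∑ γ : Γ, D' γ) = D := by
        have hterm2 : ∀ γ : Γ, D' γ =
            if ρ γ x₀ = x₀ then -(ContinuousLinearMap.id ℝ (Fin n → ℝ)) else 0 := by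
          intro γ
          rw [hD']
          by_cases hst : ρ γ x₀ = x₀
          · simp only [hst, if_pos]
            refine ContinuousLinearMap.ext fun u => ?_
            simp only [ContinuousLinearMap.comp_apply, ContinuousLinearMap.neg_apply,
              ContinuousLinearMap.id_apply, hLc, LinearMap.coe_toContinuousLinearMap']
            have huu : ρ γ⁻¹ (ρ γ u) = u := by
              rw [show (ρ γ⁻¹) ((ρ γ) u) = (ρ γ⁻¹ * ρ γ) u from rfl, ← map_mul]
              simp
            rw [map_neg, huu]
          · simp [hst]
        rw [hD]
        calc (∑ γ : Γ, D' γ)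
            = ∑ γ : Γ, (if ρ γ x₀ = x₀ then -(ContinuousLinearMap.id ℝ (Fin n → ℝ)) else 0) :=
              Finset.sum_congr rfl (fun γ _ => hterm2 γ)
          _ = m • (-(ContinuousLinearMap.id ℝ (Fin n → ℝ))) := by
              rw [Finset.sum_ite, Finset.sum_const, Finset.sum_const_zero, add_zero, hm]
          _ = (-(m:ℝ)) • ContinuousLinearMap.id ℝ (Fin n → ℝ) := by
              rw [← Nat.cast_smul_eq_nsmul ℝ m, smul_neg, ← neg_smul]
      rw [← hDeq]
      exact hsum
    · -- spectrum
      intro μ hμ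
      have hmat : (LinearMap.toMatrix' ((D : (Fin n → ℝ) →ₗ[ℝ] (Fin n → ℝ)))).map
          (Complex.ofReal : ℝ → ℂ)
          = algebraMap ℂ (Matrix (Fin n) (Fin n) ℂ) ((-(m:ℝ) : ℝ) : ℂ) := by
        have h1 : (D : (Fin n → ℝ) →ₗ[ℝ] (Fin n → ℝ)) = (-(m:ℝ)) • LinearMap.id := by
          ext v j
          simp [hD]
        rw [h1, map_smul, LinearMap.toMatrix'_id]
        ext i j
        simp only [Matrix.map_apply, Matrix.smul_apply, Matrix.one_apply,
          Algebra.algebraMap_eq_smul_one, smul_eq_mul, mul_ite, mul_one, mul_zero]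
        split <;> simp
      rw [hmat] at hμ
      have hμned : μ = ((-(m:ℝ) : ℝ) : ℂ) := by
        by_contra hne
        rw [spectrum.mem_iff] at hμ
        apply hμ
        rw [← map_sub]
        exact (isUnit_iff_ne_zero.mpr (sub_ne_zero.mpr hne)).map
          (algebraMap ℂ (Matrix (Fin n) (Fin n) ℂ))
      rw [hμned, Complex.ofReal_re]
      have hmp : (0:ℝ) < m := by exact_mod_cast hm1
      linarith
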